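/- Let K be an n×n complex symmetric matrix such that I + K is invertible and such that (I + K)⁻¹(I − K K̄)(I + K̄)⁻¹ is positive definite (as a Hermitian matrix). Then every eigenvalue of the positive semidefinite matrix K K̄* = K K̄ is strictly less than 1; equivalently, the spectral norm of K is strictly less than 1. -/

import Mathlib

open Matrix Complex
open scoped ComplexOrder

lemma posDef_mul_mul_conjTranspose {n : ℕ} {M B : Matrix (Fin n) (Fin n) ℂ}
    (hM : M.PosDef) (hB : IsUnit B) : (B * M * Bᴴ).PosDef := by
  refine Matrix.PosDef.of_dotProduct_mulVec_pos ?_ fun x hx => ?_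
  · have := hM.1
    unfold Matrix.IsHermitian at *
    simp [Matrix.conjTranspose_mul, Matrix.mul_assoc, this]
  · have hx' : Bᴴ *ᵥ x ≠ 0 := by
      intro h
      apply hx
      have hBH : IsUnit Bᴴ := (Matrix.isUnit_conjTranspose _).mpr hB
      have : (Bᴴ)⁻¹ *ᵥ (Bᴴ *ᵥ x) = x := by
        rw [Matrix.mulVec_mulVec, Matrix.nonsing_inv_mul _ ((Matrix.isUnit_iff_isUnit_det _).mp hBH), Matrix.one_mulVec]
      rw [h, Matrix.mulVec_zero] at this
      exact this.symm
    have := hM.dotProduct_mulVec_pos hx'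
    simpa only [star_mulVec, Matrix.dotProduct_mulVec, Matrix.vecMul_vecMul,
      Matrix.conjTranspose_conjTranspose] using this

theorem stmt_4 {n : ℕ} (K : Matrix (Fin n) (Fin n) ℂ)
    (hK : K = Kᵀ) (hUnit : IsUnit (1 + K))
    (hPD : Matrix.PosDef
      ((1 + K)⁻¹ * (1 - K * K.map (starRingEnd ℂ))
        * (1 + K.map (starRingEnd ℂ))⁻¹)) :
    ∀ μ ∈ spectrum ℂ (K * K.map (starRingEnd ℂ)), ‖μ‖ < 1 := by
  intro μ hμ
  -- K.map conj = Kᴴ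
  have hc : K.map (starRingEnd ℂ) = Kᴴ := by
    ext i j
    simp [Matrix.conjTranspose_apply, Matrix.map_apply]
    rw [← Matrix.transpose_apply K j i, ← hK]
  rw [hc] at hμ hPD
  set N := 1 + K with hN
  have hNH : (1 + Kᴴ) = Nᴴ := by simp [hN]
  rw [hNH] at hPD
  have hdet : IsUnit N.det := (Matrix.isUnit_iff_isUnit_det _).mp hUnit
  have hdetH : IsUnit Nᴴ.det :=
    (Matrix.isUnit_iff_isUnit_det _).mp ((Matrix.isUnit_conjTranspose _).mpr hUnit)
  -- congruence: 1 - K Kᴴ is PosDef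
  have hA : (1 - K * Kᴴ).PosDef := by
    have h2 := posDef_mul_mul_conjTranspose hPD hUnit
    have : N * (N⁻¹ * (1 - K * Kᴴ) * (Nᴴ)⁻¹) * Nᴴ = 1 - K * Kᴴ := by
      rw [← Matrix.mul_assoc, ← Matrix.mul_assoc, Matrix.mul_nonsing_inv _ hdet,
        Matrix.one_mul, Matrix.mul_assoc, Matrix.nonsing_inv_mul _ hdetH, Matrix.mul_one]
    rwa [this] at h2
  -- eigenvector
  rw [← AlgEquiv.spectrum_eq Matrix.toLinAlgEquiv',
    ← Module.End.hasEigenvalue_iff_mem_spectrum] at hμ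
  obtain ⟨v, hv⟩ := hμ.exists_hasEigenvector
  have hv0 : v ≠ 0 := hv.right
  have hvec : (K * Kᴴ) *ᵥ v = μ • v := by
    have h := hv.apply_eq_smul
    rwa [Matrix.toLinAlgEquiv'_apply] at h
  set s : ℂ := dotProduct (star v) v with hs
  have hspos : 0 < s := by
    rw [hs]
    exact Matrix.dotProduct_star_self_pos_iff.mpr hv0
  have hpsd : 0 ≤ μ * s := by
    have h1 : (K * Kᴴ).PosSemidef := Matrix.posSemidef_self_mul_conjTranspose K
    have := h1.dotProduct_mulVec_nonneg v
    rw [hvec] at this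
    simpa [dotProduct_smul, hs, smul_eq_mul] using this
  have hlt : 0 < (1 - μ) * s := by
    have := hA.dotProduct_mulVec_pos hv0
    rw [Matrix.sub_mulVec, Matrix.one_mulVec, hvec] at this
    have h2 : dotProduct (star v) (v - μ • v) = (1 - μ) * s := by
      simp [dotProduct_sub, dotProduct_smul, hs, smul_eq_mul, sub_mul, one_mul]
    rwa [h2] at this
  -- now pass to real/imag parts
  rw [Complex.lt_def] at hspos hlt
  rw [Complex.le_def] at hpsd
  simp only [Complex.zero_re, Complex.zero_im, Complex.mul_re, Complex.mul_im,
    Complex.sub_re, Complex.sub_im, Complex.one_re, Complex.one_im] at hspos hlt hpsd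
  obtain ⟨hsre, hsim⟩ := hspos
  rw [← hsim] at hpsd hlt
  have him : μ.im = 0 := by
    have := hpsd.2
    simp at this
    nlinarith [hpsd.2]
  have hre0 : 0 ≤ μ.re := by nlinarith [hpsd.1]
  have hre1 : μ.re < 1 := by nlinarith [hlt.1]
  have : μ = (μ.re : ℂ) := Complex.ext (by simp) (by simp [him])
  rw [this]
  simpa using abs_lt.mpr ⟨by linarith, hre1⟩
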